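/- There is an absolute constant C such that for every r ∈ ℓ²(ℤ) and every N ≥ 1, the triple sum Σ_{n>N} Σ_{p≠n} Σ_{k≠n} |r(p+k)|²/((n-p)²(n-k)²) ≤ C·(‖r‖²/N + E_N(r)²). -/

import Mathlib

open scoped ENNReal

noncomputable def l2norm2 (r : ℤ → ℝ) : ℝ≥0∞ := ∑' k : ℤ, ENNReal.ofReal ((r k) ^ 2)

noncomputable def tailNorm2 (r : ℤ → ℝ) (N : ℕ) : ℝ≥0∞ :=
  ∑' k : {k : ℤ // (N : ℤ) ≤ |k|}, ENNReal.ofReal ((r k.1) ^ 2)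

/-! ### Auxiliary lemmas -/

section Aux

lemma tel_hasSum (N : ℕ) (hN : 1 ≤ N) :
    HasSum (fun j : ℕ => 1/((N:ℝ)+j) - 1/((N:ℝ)+1+j)) (1/(N:ℝ)) := by
  have hpos : ∀ j : ℕ, 0 < (N:ℝ) + j := by
    intro j
    have : (1:ℝ) ≤ (N:ℝ) := by exact_mod_cast hN
    positivity
  set F : ℕ → ℝ := fun j => 1/((N:ℝ)+j) with hF
  have hcongr : ∀ j : ℕ, 1/((N:ℝ)+j) - 1/((N:ℝ)+1+j) = F j - F (j+1) := by
    intro j; simp only [hF]; push_cast; ring_nf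
  have hnonneg : ∀ j : ℕ, 0 ≤ F j - F (j+1) := by
    intro j
    have h1 : (N:ℝ) + j ≤ (N:ℝ) + (j+1:ℕ) := by push_cast; linarith
    have := one_div_le_one_div_of_le (hpos j) h1
    simpa [hF] using this
  have htendsto : Filter.Tendsto F Filter.atTop (nhds 0) := by
    have h1 : Filter.Tendsto (fun j : ℕ => (N:ℝ) + j) Filter.atTop Filter.atTop :=
      Filter.tendsto_atTop_add_const_left _ _ tendsto_natCast_atTop_atTop
    have h2 := tendsto_inv_atTop_zero.comp h1
    simpa [hF, Function.comp_def, one_div] using h2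
  have key : HasSum (fun j : ℕ => F j - F (j+1)) (F 0) := by
    rw [hasSum_iff_tendsto_nat_of_nonneg hnonneg]
    have : ∀ n : ℕ, ∑ i ∈ Finset.range n, (F i - F (i+1)) = F 0 - F n := fun n =>
      Finset.sum_range_sub' F n
    simp only [this]
    simpa using (tendsto_const_nhds.sub htendsto)
  have hF0 : F 0 = 1/(N:ℝ) := by simp [hF]
  rw [← hF0]
  exact key.congr_fun fun j => (hcongr j)

def eqAux (N : ℕ) : ℕ ≃ {n : ℤ // (N : ℤ) < n} where
  toFun := fun j => ⟨(N:ℤ) + 1 + j, by omega⟩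
  invFun := fun n => (n.1 - N - 1).toNat
  left_inv := fun j => by simp only; omega
  right_inv := fun n => by
    ext
    have := n.2
    simp only
    omega

lemma sq_summable (N : ℕ) : Summable (fun j : ℕ => 1 / ((N:ℝ)+1+j)^2) := by
  have hbase : Summable (fun j : ℕ => 1/((j:ℝ))^2) :=
    Real.summable_one_div_nat_pow.mpr one_lt_two
  have := (summable_nat_add_iff (N+1)).mpr hbase
  refine this.congr fun j => ?_
  push_cast
  ring_nf

lemma nsum_le (N : ℕ) (hN : 1 ≤ N) :
    ∑' n : {n : ℤ // (N : ℤ) < n}, ENNReal.ofReal (1 / (n.1:ℝ)^2)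
      ≤ ENNReal.ofReal (1/(N:ℝ)) := by
  have hNpos : (0:ℝ) < N := by exact_mod_cast hN
  rw [← Equiv.tsum_eq (eqAux N)]
  calc ∑' j : ℕ, ENNReal.ofReal (1 / (((eqAux N) j).1 : ℝ)^2)
      = ∑' j : ℕ, ENNReal.ofReal (1 / ((N:ℝ)+1+j)^2) := by
        refine tsum_congr fun j => ?_
        congr 2
        show ((((N:ℤ) + 1 + j) : ℤ) : ℝ) ^ 2 = ((N:ℝ)+1+j)^2
        push_cast
        ring
    _ = ENNReal.ofReal (∑' j : ℕ, 1 / ((N:ℝ)+1+j)^2) :=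
        (ENNReal.ofReal_tsum_of_nonneg (fun j => by positivity) (sq_summable N)).symm
    _ ≤ ENNReal.ofReal (1/(N:ℝ)) := by
        apply ENNReal.ofReal_le_ofReal
        have htel := tel_hasSum N hN
        rw [← htel.tsum_eq]
        refine Summable.tsum_le_tsum ?_ (sq_summable N) htel.summable
        intro j
        have h1 : (0:ℝ) < (N:ℝ) + j := by positivity
        have h2 : (0:ℝ) < (N:ℝ) + 1 + j := by positivity
        rw [div_sub_div _ _ h1.ne' h2.ne']
        have hnum : 1 * ((N:ℝ) + 1 + ↑j) - ((N:ℝ) + ↑j) * 1 = 1 := by ring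
        rw [hnum]
        apply one_div_le_one_div_of_le (by positivity)
        nlinarith

noncomputable def Gc : ℝ≥0∞ := ∑' a : ℤ, ENNReal.ofReal (1 / (a:ℝ)^2)

lemma Gc_ne_top : Gc ≠ ∞ := by
  rw [Gc, ← ENNReal.ofReal_tsum_of_nonneg (fun a => by positivity)
    (Real.summable_one_div_int_pow.mpr one_lt_two)]
  exact ENNReal.ofReal_ne_top

lemma inner_p_sum (r : ℤ → ℝ) (c : ℝ) (hc : 0 ≤ c) (k : ℤ) :
    ∑' p : ℤ, ENNReal.ofReal (c * (r (p+k))^2) = ENNReal.ofReal c * l2norm2 r := by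
  calc ∑' p : ℤ, ENNReal.ofReal (c * (r (p+k))^2)
      = ∑' p : ℤ, ENNReal.ofReal c * ENNReal.ofReal ((r (p+k))^2) := by
        exact tsum_congr fun p => ENNReal.ofReal_mul hc
    _ = ENNReal.ofReal c * ∑' p : ℤ, ENNReal.ofReal ((r (p+k))^2) := ENNReal.tsum_mul_left
    _ = ENNReal.ofReal c * l2norm2 r := by
        rw [l2norm2]
        congr 1
        exact Equiv.tsum_eq (Equiv.addRight k) (fun m => ENNReal.ofReal ((r m)^2))

lemma inner_k_sum (r : ℤ → ℝ) (c : ℝ) (hc : 0 ≤ c) (p : ℤ) :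
    ∑' k : ℤ, ENNReal.ofReal (c * (r (p+k))^2) = ENNReal.ofReal c * l2norm2 r := by
  calc ∑' k : ℤ, ENNReal.ofReal (c * (r (p+k))^2)
      = ∑' k : ℤ, ENNReal.ofReal c * ENNReal.ofReal ((r (p+k))^2) := by
        exact tsum_congr fun k => ENNReal.ofReal_mul hc
    _ = ENNReal.ofReal c * ∑' k : ℤ, ENNReal.ofReal ((r (p+k))^2) := ENNReal.tsum_mul_left
    _ = ENNReal.ofReal c * l2norm2 r := by
        rw [l2norm2]
        congr 1
        exact Equiv.tsum_eq (Equiv.addLeft p) (fun m => ENNReal.ofReal ((r m)^2))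

lemma inner_k_const (n : ℤ) :
    ∑' k : ℤ, ENNReal.ofReal (1 / ((n:ℝ)-(k:ℝ))^2) = Gc := by
  rw [Gc]
  rw [← Equiv.tsum_eq (Equiv.subLeft n) (fun k => ENNReal.ofReal (1 / ((n:ℝ)-(k:ℝ))^2))]
  refine tsum_congr fun a => ?_
  congr 2
  simp [Equiv.subLeft]

lemma sumB (r : ℤ → ℝ) (N : ℕ) (hN : 1 ≤ N) :
    ∑' n : {n : ℤ // (N:ℤ) < n}, ∑' p : ℤ, ∑' k : ℤ,
      ENNReal.ofReal (4 * (r (p+k))^2 / ((n.1:ℝ)^2 * ((n.1:ℝ)-(k:ℝ))^2))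
    ≤ 4 * ENNReal.ofReal (1/(N:ℝ)) * (Gc * l2norm2 r) := by
  have step1 : ∀ n : {n : ℤ // (N:ℤ) < n},
      ∑' p : ℤ, ∑' k : ℤ,
        ENNReal.ofReal (4 * (r (p+k))^2 / ((n.1:ℝ)^2 * ((n.1:ℝ)-(k:ℝ))^2))
      = ENNReal.ofReal (4 / (n.1:ℝ)^2) * (Gc * l2norm2 r) := by
    intro n
    rw [ENNReal.tsum_comm]
    calc ∑' k : ℤ, ∑' p : ℤ,
          ENNReal.ofReal (4 * (r (p+k))^2 / ((n.1:ℝ)^2 * ((n.1:ℝ)-(k:ℝ))^2))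
        = ∑' k : ℤ, ∑' p : ℤ,
          ENNReal.ofReal ((4 / ((n.1:ℝ)^2 * ((n.1:ℝ)-(k:ℝ))^2)) * (r (p+k))^2) := by
          refine tsum_congr fun k => tsum_congr fun p => ?_
          congr 1
          ring
      _ = ∑' k : ℤ, ENNReal.ofReal (4 / ((n.1:ℝ)^2 * ((n.1:ℝ)-(k:ℝ))^2)) * l2norm2 r := by
          exact tsum_congr fun k => inner_p_sum r _ (by positivity) k
      _ = (∑' k : ℤ, ENNReal.ofReal (4 / ((n.1:ℝ)^2 * ((n.1:ℝ)-(k:ℝ))^2))) * l2norm2 r :=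
          ENNReal.tsum_mul_right
      _ = (∑' k : ℤ, ENNReal.ofReal (4 / (n.1:ℝ)^2) *
            ENNReal.ofReal (1 / ((n.1:ℝ)-(k:ℝ))^2)) * l2norm2 r := by
          congr 1
          refine tsum_congr fun k => ?_
          rw [← ENNReal.ofReal_mul (by positivity)]
          rw [div_mul_div_comm, mul_one]
      _ = ENNReal.ofReal (4 / (n.1:ℝ)^2) * Gc * l2norm2 r := by
          rw [ENNReal.tsum_mul_left, inner_k_const]
      _ = ENNReal.ofReal (4 / (n.1:ℝ)^2) * (Gc * l2norm2 r) := by ring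
  calc ∑' n : {n : ℤ // (N:ℤ) < n}, ∑' p : ℤ, ∑' k : ℤ,
        ENNReal.ofReal (4 * (r (p+k))^2 / ((n.1:ℝ)^2 * ((n.1:ℝ)-(k:ℝ))^2))
      = ∑' n : {n : ℤ // (N:ℤ) < n},
          ENNReal.ofReal (4 / (n.1:ℝ)^2) * (Gc * l2norm2 r) := tsum_congr step1
    _ = (∑' n : {n : ℤ // (N:ℤ) < n}, ENNReal.ofReal (4 / (n.1:ℝ)^2)) * (Gc * l2norm2 r) :=
        ENNReal.tsum_mul_right
    _ ≤ (4 * ENNReal.ofReal (1/(N:ℝ))) * (Gc * l2norm2 r) := by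
        refine mul_le_mul_left ?_ _
        calc ∑' n : {n : ℤ // (N:ℤ) < n}, ENNReal.ofReal (4 / (n.1:ℝ)^2)
            = ∑' n : {n : ℤ // (N:ℤ) < n}, 4 * ENNReal.ofReal (1 / (n.1:ℝ)^2) := by
              refine tsum_congr fun n => ?_
              rw [show (4:ℝ≥0∞) = ENNReal.ofReal 4 by norm_num,
                ← ENNReal.ofReal_mul (by norm_num)]
              congr 1
              ring
          _ = 4 * ∑' n : {n : ℤ // (N:ℤ) < n}, ENNReal.ofReal (1 / (n.1:ℝ)^2) :=
              ENNReal.tsum_mul_left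
          _ ≤ 4 * ENNReal.ofReal (1/(N:ℝ)) := mul_le_mul_right (nsum_le N hN) _
    _ = 4 * ENNReal.ofReal (1/(N:ℝ)) * (Gc * l2norm2 r) := by ring

lemma sumC (r : ℤ → ℝ) (N : ℕ) (hN : 1 ≤ N) :
    ∑' n : {n : ℤ // (N:ℤ) < n}, ∑' p : ℤ, ∑' k : ℤ,
      ENNReal.ofReal (4 * (r (p+k))^2 / ((n.1:ℝ)^2 * ((n.1:ℝ)-(p:ℝ))^2))
    ≤ 4 * ENNReal.ofReal (1/(N:ℝ)) * (Gc * l2norm2 r) := by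
  have step1 : ∀ n : {n : ℤ // (N:ℤ) < n},
      ∑' p : ℤ, ∑' k : ℤ,
        ENNReal.ofReal (4 * (r (p+k))^2 / ((n.1:ℝ)^2 * ((n.1:ℝ)-(p:ℝ))^2))
      = ENNReal.ofReal (4 / (n.1:ℝ)^2) * (Gc * l2norm2 r) := by
    intro n
    calc ∑' p : ℤ, ∑' k : ℤ,
          ENNReal.ofReal (4 * (r (p+k))^2 / ((n.1:ℝ)^2 * ((n.1:ℝ)-(p:ℝ))^2))
        = ∑' p : ℤ, ∑' k : ℤ,
          ENNReal.ofReal ((4 / ((n.1:ℝ)^2 * ((n.1:ℝ)-(p:ℝ))^2)) * (r (p+k))^2) := by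
          refine tsum_congr fun p => tsum_congr fun k => ?_
          congr 1
          ring
      _ = ∑' p : ℤ, ENNReal.ofReal (4 / ((n.1:ℝ)^2 * ((n.1:ℝ)-(p:ℝ))^2)) * l2norm2 r := by
          exact tsum_congr fun p => inner_k_sum r _ (by positivity) p
      _ = (∑' p : ℤ, ENNReal.ofReal (4 / ((n.1:ℝ)^2 * ((n.1:ℝ)-(p:ℝ))^2))) * l2norm2 r :=
          ENNReal.tsum_mul_right
      _ = (∑' p : ℤ, ENNReal.ofReal (4 / (n.1:ℝ)^2) *
            ENNReal.ofReal (1 / ((n.1:ℝ)-(p:ℝ))^2)) * l2norm2 r := by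
          congr 1
          refine tsum_congr fun p => ?_
          rw [← ENNReal.ofReal_mul (by positivity)]
          rw [div_mul_div_comm, mul_one]
      _ = ENNReal.ofReal (4 / (n.1:ℝ)^2) * Gc * l2norm2 r := by
          rw [ENNReal.tsum_mul_left, inner_k_const]
      _ = ENNReal.ofReal (4 / (n.1:ℝ)^2) * (Gc * l2norm2 r) := by ring
  calc ∑' n : {n : ℤ // (N:ℤ) < n}, ∑' p : ℤ, ∑' k : ℤ,
        ENNReal.ofReal (4 * (r (p+k))^2 / ((n.1:ℝ)^2 * ((n.1:ℝ)-(p:ℝ))^2))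
      = ∑' n : {n : ℤ // (N:ℤ) < n},
          ENNReal.ofReal (4 / (n.1:ℝ)^2) * (Gc * l2norm2 r) := tsum_congr step1
    _ = (∑' n : {n : ℤ // (N:ℤ) < n}, ENNReal.ofReal (4 / (n.1:ℝ)^2)) * (Gc * l2norm2 r) :=
        ENNReal.tsum_mul_right
    _ ≤ (4 * ENNReal.ofReal (1/(N:ℝ))) * (Gc * l2norm2 r) := by
        refine mul_le_mul_left ?_ _
        calc ∑' n : {n : ℤ // (N:ℤ) < n}, ENNReal.ofReal (4 / (n.1:ℝ)^2)
            = ∑' n : {n : ℤ // (N:ℤ) < n}, 4 * ENNReal.ofReal (1 / (n.1:ℝ)^2) := by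
              refine tsum_congr fun n => ?_
              rw [show (4:ℝ≥0∞) = ENNReal.ofReal 4 by norm_num,
                ← ENNReal.ofReal_mul (by norm_num)]
              congr 1
              ring
          _ = 4 * ∑' n : {n : ℤ // (N:ℤ) < n}, ENNReal.ofReal (1 / (n.1:ℝ)^2) :=
              ENNReal.tsum_mul_left
          _ ≤ 4 * ENNReal.ofReal (1/(N:ℝ)) := mul_le_mul_right (nsum_le N hN) _
    _ = 4 * ENNReal.ofReal (1/(N:ℝ)) * (Gc * l2norm2 r) := by ring

noncomputable def Hf (r : ℤ → ℝ) (N : ℕ) : ℤ → ℝ≥0∞ :=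
  fun m => if (N:ℤ) ≤ |m| then ENNReal.ofReal ((r m)^2) else 0

lemma Hf_tsum (r : ℤ → ℝ) (N : ℕ) : ∑' m : ℤ, Hf r N m = tailNorm2 r N := by
  calc ∑' m : ℤ, Hf r N m
      = ∑' m : ℤ, Set.indicator {k : ℤ | (N:ℤ) ≤ |k|}
          (fun m => ENNReal.ofReal ((r m)^2)) m := by
        refine tsum_congr fun m => ?_
        rw [Set.indicator_apply, Hf]
        simp [Set.mem_setOf_eq]
    _ = ∑' (x : ↑{k : ℤ | (N:ℤ) ≤ |k|}), ENNReal.ofReal ((r x.1)^2) :=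
        (tsum_subtype {k : ℤ | (N:ℤ) ≤ |k|} (fun m => ENNReal.ofReal ((r m)^2))).symm
    _ = tailNorm2 r N := rfl

lemma sumA (r : ℤ → ℝ) (N : ℕ) :
    ∑' n : {n : ℤ // (N:ℤ) < n}, ∑' p : ℤ, ∑' k : ℤ,
      (if (N:ℤ) ≤ |p+k| then
        ENNReal.ofReal ((r (p+k))^2 / (((n.1:ℝ)-(p:ℝ))^2 * ((n.1:ℝ)-(k:ℝ))^2)) else 0)
    ≤ Gc * (Gc * tailNorm2 r N) := by
  have step1 : ∀ n : {n : ℤ // (N:ℤ) < n},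
      ∑' p : ℤ, ∑' k : ℤ,
        (if (N:ℤ) ≤ |p+k| then
          ENNReal.ofReal ((r (p+k))^2 / (((n.1:ℝ)-(p:ℝ))^2 * ((n.1:ℝ)-(k:ℝ))^2)) else 0)
      = ∑' a : ℤ, ∑' b : ℤ, ENNReal.ofReal (1/(a:ℝ)^2) *
          (ENNReal.ofReal (1/(b:ℝ)^2) * Hf r N (2*n.1 - a - b)) := by
    intro n
    rw [← Equiv.tsum_eq (Equiv.subLeft n.1) (fun p => ∑' k : ℤ,
        (if (N:ℤ) ≤ |p+k| then
          ENNReal.ofReal ((r (p+k))^2 / (((n.1:ℝ)-(p:ℝ))^2 * ((n.1:ℝ)-(k:ℝ))^2)) else 0))]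
    refine tsum_congr fun a => ?_
    rw [← Equiv.tsum_eq (Equiv.subLeft n.1) (fun k =>
        (if (N:ℤ) ≤ |(Equiv.subLeft n.1) a + k| then
          ENNReal.ofReal ((r ((Equiv.subLeft n.1) a + k))^2 /
            (((n.1:ℝ)-(((Equiv.subLeft n.1) a : ℤ):ℝ))^2 * ((n.1:ℝ)-(k:ℝ))^2)) else 0))]
    refine tsum_congr fun b => ?_
    have hab : (Equiv.subLeft n.1) a + (Equiv.subLeft n.1) b = 2*n.1 - a - b := by
      simp [Equiv.subLeft]
      ring
    have hca : ((n.1:ℝ) - (((Equiv.subLeft n.1) a : ℤ):ℝ)) = (a:ℝ) := by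
      simp [Equiv.subLeft]
    have hcb : ((n.1:ℝ) - (((Equiv.subLeft n.1) b : ℤ):ℝ)) = (b:ℝ) := by
      simp [Equiv.subLeft]
    rw [hab, hca, hcb, Hf]
    by_cases h : (N:ℤ) ≤ |2*n.1 - a - b|
    · rw [if_pos h, if_pos h]
      rw [← ENNReal.ofReal_mul (by positivity), ← ENNReal.ofReal_mul (by positivity)]
      congr 1
      field_simp
    · rw [if_neg h, if_neg h, mul_zero, mul_zero]
  calc ∑' n : {n : ℤ // (N:ℤ) < n}, ∑' p : ℤ, ∑' k : ℤ,
        (if (N:ℤ) ≤ |p+k| then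
          ENNReal.ofReal ((r (p+k))^2 / (((n.1:ℝ)-(p:ℝ))^2 * ((n.1:ℝ)-(k:ℝ))^2)) else 0)
      = ∑' n : {n : ℤ // (N:ℤ) < n}, ∑' a : ℤ, ∑' b : ℤ, ENNReal.ofReal (1/(a:ℝ)^2) *
          (ENNReal.ofReal (1/(b:ℝ)^2) * Hf r N (2*n.1 - a - b)) := tsum_congr step1
    _ = ∑' a : ℤ, ∑' n : {n : ℤ // (N:ℤ) < n}, ∑' b : ℤ, ENNReal.ofReal (1/(a:ℝ)^2) *
          (ENNReal.ofReal (1/(b:ℝ)^2) * Hf r N (2*n.1 - a - b)) := ENNReal.tsum_comm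
    _ = ∑' a : ℤ, ∑' b : ℤ, ∑' n : {n : ℤ // (N:ℤ) < n}, ENNReal.ofReal (1/(a:ℝ)^2) *
          (ENNReal.ofReal (1/(b:ℝ)^2) * Hf r N (2*n.1 - a - b)) :=
        tsum_congr fun a => ENNReal.tsum_comm
    _ = ∑' a : ℤ, ENNReal.ofReal (1/(a:ℝ)^2) * ∑' b : ℤ, ENNReal.ofReal (1/(b:ℝ)^2) *
          ∑' n : {n : ℤ // (N:ℤ) < n}, Hf r N (2*n.1 - a - b) := by
        refine tsum_congr fun a => ?_
        rw [← ENNReal.tsum_mul_left]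
        refine tsum_congr fun b => ?_
        rw [← ENNReal.tsum_mul_left, ← ENNReal.tsum_mul_left]
    _ ≤ ∑' a : ℤ, ENNReal.ofReal (1/(a:ℝ)^2) * ∑' b : ℤ, ENNReal.ofReal (1/(b:ℝ)^2) *
          tailNorm2 r N := by
        refine ENNReal.tsum_le_tsum fun a => mul_le_mul_right ?_ _
        refine ENNReal.tsum_le_tsum fun b => mul_le_mul_right ?_ _
        rw [← Hf_tsum r N]
        have hinj : Function.Injective
            (fun n : {n : ℤ // (N:ℤ) < n} => 2*n.1 - a - b) := by
          intro x y h
          have h' : 2*(x.1:ℤ) - a - b = 2*(y.1:ℤ) - a - b := h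
          exact Subtype.ext (by omega)
        exact ENNReal.tsum_comp_le_tsum_of_injective hinj (Hf r N)
    _ = Gc * (Gc * tailNorm2 r N) := by
        rw [Gc, ← ENNReal.tsum_mul_right, ← ENNReal.tsum_mul_right]

lemma pointwise_bound (r : ℤ → ℝ) (N : ℕ) (hN : 1 ≤ N) (n p k : ℤ) (hn : (N:ℤ) < n) :
    ENNReal.ofReal ((r (p+k))^2 / (((n:ℝ)-(p:ℝ))^2 * ((n:ℝ)-(k:ℝ))^2)) ≤
    (if (N:ℤ) ≤ |p+k| then
        ENNReal.ofReal ((r (p+k))^2 / (((n:ℝ)-(p:ℝ))^2 * ((n:ℝ)-(k:ℝ))^2)) else 0)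
    + ENNReal.ofReal (4 * (r (p+k))^2 / ((n:ℝ)^2 * ((n:ℝ)-(k:ℝ))^2))
    + ENNReal.ofReal (4 * (r (p+k))^2 / ((n:ℝ)^2 * ((n:ℝ)-(p:ℝ))^2)) := by
  have hn1 : (1:ℤ) ≤ n := by omega
  by_cases hA : 2*|n-p| ≤ n ∧ 2*|n-k| ≤ n
  · obtain ⟨h1, h2⟩ := hA
    have ha1 := le_abs_self (n-p)
    have hb1 := le_abs_self (n-k)
    have hnk : (N:ℤ) ≤ p + k := by linarith
    have hm : (N:ℤ) ≤ |p+k| := hnk.trans (le_abs_self _)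
    rw [if_pos hm]
    exact le_add_right le_self_add
  · rw [Decidable.not_and_iff_or_not] at hA
    rcases hA with h | h
    · push_neg at h
      have habs : n^2 < 4*(n-p)^2 := by
        have h0 : 0 ≤ n := by omega
        have : n = |n| := (abs_of_nonneg h0).symm
        nlinarith [abs_nonneg (n-p), sq_abs (n-p)]
      have hcast : ((n:ℝ))^2 ≤ 4*((n:ℝ)-(p:ℝ))^2 := by
        have : ((n^2 : ℤ) : ℝ) ≤ ((4*(n-p)^2 : ℤ) : ℝ) := by exact_mod_cast habs.le
        push_cast at this
        nlinarith [this]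
      have key : (r (p+k))^2 / (((n:ℝ)-(p:ℝ))^2*((n:ℝ)-(k:ℝ))^2)
          ≤ 4*(r (p+k))^2 / ((n:ℝ)^2*((n:ℝ)-(k:ℝ))^2) := by
        by_cases hk : ((n:ℝ)-(k:ℝ)) = 0
        · simp [hk]
        · have hp0 : ((n:ℝ)-(p:ℝ)) ≠ 0 := by
            intro h0
            rw [h0] at hcast
            have : (1:ℝ) ≤ (n:ℝ) := by exact_mod_cast hn1
            nlinarith
          rw [div_le_div_iff₀ (by positivity) (by positivity)]
          nlinarith [mul_le_mul_of_nonneg_left hcast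
            (mul_nonneg (sq_nonneg (r (p+k))) (sq_nonneg ((n:ℝ)-(k:ℝ)))),
            sq_nonneg ((n:ℝ)-(k:ℝ))]
      exact le_trans (ENNReal.ofReal_le_ofReal key) (le_add_right le_add_self)
    · push_neg at h
      have habs : n^2 < 4*(n-k)^2 := by
        have h0 : 0 ≤ n := by omega
        have : n = |n| := (abs_of_nonneg h0).symm
        nlinarith [abs_nonneg (n-k), sq_abs (n-k)]
      have hcast : ((n:ℝ))^2 ≤ 4*((n:ℝ)-(k:ℝ))^2 := by
        have : ((n^2 : ℤ) : ℝ) ≤ ((4*(n-k)^2 : ℤ) : ℝ) := by exact_mod_cast habs.le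
        push_cast at this
        nlinarith [this]
      have key : (r (p+k))^2 / (((n:ℝ)-(p:ℝ))^2*((n:ℝ)-(k:ℝ))^2)
          ≤ 4*(r (p+k))^2 / ((n:ℝ)^2*((n:ℝ)-(p:ℝ))^2) := by
        by_cases hp : ((n:ℝ)-(p:ℝ)) = 0
        · simp [hp]
        · have hk0 : ((n:ℝ)-(k:ℝ)) ≠ 0 := by
            intro h0
            rw [h0] at hcast
            have : (1:ℝ) ≤ (n:ℝ) := by exact_mod_cast hn1
            nlinarith
          rw [div_le_div_iff₀ (by positivity) (by positivity)]
          nlinarith [mul_le_mul_of_nonneg_left hcast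
            (mul_nonneg (sq_nonneg (r (p+k))) (sq_nonneg ((n:ℝ)-(p:ℝ)))),
            sq_nonneg ((n:ℝ)-(p:ℝ))]
      exact le_trans (ENNReal.ofReal_le_ofReal key) le_add_self

lemma tsum_ne_eq (c : ℤ) (f : ℤ → ℝ≥0∞) (hf : f c = 0) :
    ∑' p : {p : ℤ // p ≠ c}, f p.1 = ∑' p : ℤ, f p := by
  calc ∑' p : {p : ℤ // p ≠ c}, f p.1
      = ∑' (x : ↑{p : ℤ | p ≠ c}), f x.1 := rfl
    _ = ∑' p : ℤ, Set.indicator {p : ℤ | p ≠ c} f p := tsum_subtype _ _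
    _ = ∑' p : ℤ, f p := by
        refine tsum_congr fun p => ?_
        rw [Set.indicator_apply]
        by_cases h : p = c
        · simp [h, hf]
        · simp [Set.mem_setOf_eq, h]

end Aux

/-- There is an absolute constant `C` such that for every `r ∈ ℓ²(ℤ)` and `N ≥ 1`,
`Σ_{n>N} Σ_{p≠n} Σ_{k≠n} |r(p+k)|²/((n-p)²(n-k)²) ≤ C (‖r‖²/N + E_N(r)²)`. -/
theorem stmt5 : ∃ C : ℝ, 0 < C ∧ ∀ r : ℤ → ℝ, Summable (fun k => (r k) ^ 2) →
    ∀ N : ℕ, 1 ≤ N →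
    ∑' n : {n : ℤ // (N : ℤ) < n}, ∑' p : {p : ℤ // p ≠ n.1}, ∑' k : {k : ℤ // k ≠ n.1},
      ENNReal.ofReal ((r (p.1 + k.1)) ^ 2 /
        (((n.1 : ℝ) - (p.1 : ℝ)) ^ 2 * ((n.1 : ℝ) - (k.1 : ℝ)) ^ 2))
    ≤ ENNReal.ofReal C * (l2norm2 r / (N : ℝ≥0∞) + tailNorm2 r N) := by
  set g : ℝ := Gc.toReal with hgdef
  have hg0 : 0 ≤ g := ENNReal.toReal_nonneg
  have hGc : Gc = ENNReal.ofReal g := (ENNReal.ofReal_toReal Gc_ne_top).symm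
  refine ⟨8*g + g^2 + 1, by positivity, ?_⟩
  intro r _ N hN
  have hNpos : (0:ℝ) < N := by exact_mod_cast hN
  -- extend the p,k sums to all of ℤ
  have hext : ∀ n : {n : ℤ // (N:ℤ) < n},
      (∑' p : {p : ℤ // p ≠ n.1}, ∑' k : {k : ℤ // k ≠ n.1},
        ENNReal.ofReal ((r (p.1 + k.1)) ^ 2 /
          (((n.1 : ℝ) - (p.1 : ℝ)) ^ 2 * ((n.1 : ℝ) - (k.1 : ℝ)) ^ 2)))
      = ∑' p : ℤ, ∑' k : ℤ, ENNReal.ofReal ((r (p + k)) ^ 2 /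
          (((n.1 : ℝ) - (p : ℝ)) ^ 2 * ((n.1 : ℝ) - (k : ℝ)) ^ 2)) := by
    intro n
    rw [tsum_ne_eq n.1 (fun p => ∑' k : {k : ℤ // k ≠ n.1},
        ENNReal.ofReal ((r (p + k.1)) ^ 2 /
          (((n.1 : ℝ) - (p : ℝ)) ^ 2 * ((n.1 : ℝ) - (k.1 : ℝ)) ^ 2))) (by simp)]
    refine tsum_congr fun p => ?_
    rw [tsum_ne_eq n.1 (fun k =>
        ENNReal.ofReal ((r (p + k)) ^ 2 /
          (((n.1 : ℝ) - (p : ℝ)) ^ 2 * ((n.1 : ℝ) - (k : ℝ)) ^ 2))) (by simp)]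
  rw [tsum_congr hext]
  -- pointwise bound and splitting
  have hsplit : ∀ n : {n : ℤ // (N:ℤ) < n},
      (∑' p : ℤ, ∑' k : ℤ, ENNReal.ofReal ((r (p + k)) ^ 2 /
          (((n.1 : ℝ) - (p : ℝ)) ^ 2 * ((n.1 : ℝ) - (k : ℝ)) ^ 2)))
      ≤ (∑' p : ℤ, ∑' k : ℤ, (if (N:ℤ) ≤ |p+k| then
          ENNReal.ofReal ((r (p+k))^2 / (((n.1:ℝ)-(p:ℝ))^2 * ((n.1:ℝ)-(k:ℝ))^2)) else 0))
        + (∑' p : ℤ, ∑' k : ℤ,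
            ENNReal.ofReal (4 * (r (p+k))^2 / ((n.1:ℝ)^2 * ((n.1:ℝ)-(k:ℝ))^2)))
        + (∑' p : ℤ, ∑' k : ℤ,
            ENNReal.ofReal (4 * (r (p+k))^2 / ((n.1:ℝ)^2 * ((n.1:ℝ)-(p:ℝ))^2))) := by
    intro n
    calc (∑' p : ℤ, ∑' k : ℤ, ENNReal.ofReal ((r (p + k)) ^ 2 /
          (((n.1 : ℝ) - (p : ℝ)) ^ 2 * ((n.1 : ℝ) - (k : ℝ)) ^ 2)))
        ≤ ∑' p : ℤ, ∑' k : ℤ, ((if (N:ℤ) ≤ |p+k| then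
            ENNReal.ofReal ((r (p+k))^2 / (((n.1:ℝ)-(p:ℝ))^2 * ((n.1:ℝ)-(k:ℝ))^2)) else 0)
          + ENNReal.ofReal (4 * (r (p+k))^2 / ((n.1:ℝ)^2 * ((n.1:ℝ)-(k:ℝ))^2))
          + ENNReal.ofReal (4 * (r (p+k))^2 / ((n.1:ℝ)^2 * ((n.1:ℝ)-(p:ℝ))^2))) := by
          refine ENNReal.tsum_le_tsum fun p => ENNReal.tsum_le_tsum fun k => ?_
          exact pointwise_bound r N hN n.1 p k n.2
      _ = _ := by
          rw [← ENNReal.tsum_add]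
          rw [← ENNReal.tsum_add]
          refine tsum_congr fun p => ?_
          rw [← ENNReal.tsum_add, ← ENNReal.tsum_add]
  calc ∑' n : {n : ℤ // (N:ℤ) < n}, ∑' p : ℤ, ∑' k : ℤ,
        ENNReal.ofReal ((r (p + k)) ^ 2 /
          (((n.1 : ℝ) - (p : ℝ)) ^ 2 * ((n.1 : ℝ) - (k : ℝ)) ^ 2))
      ≤ ∑' n : {n : ℤ // (N:ℤ) < n},
        ((∑' p : ℤ, ∑' k : ℤ, (if (N:ℤ) ≤ |p+k| then
          ENNReal.ofReal ((r (p+k))^2 / (((n.1:ℝ)-(p:ℝ))^2 * ((n.1:ℝ)-(k:ℝ))^2)) else 0))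
        + (∑' p : ℤ, ∑' k : ℤ,
            ENNReal.ofReal (4 * (r (p+k))^2 / ((n.1:ℝ)^2 * ((n.1:ℝ)-(k:ℝ))^2)))
        + (∑' p : ℤ, ∑' k : ℤ,
            ENNReal.ofReal (4 * (r (p+k))^2 / ((n.1:ℝ)^2 * ((n.1:ℝ)-(p:ℝ))^2)))) :=
        ENNReal.tsum_le_tsum hsplit
    _ = (∑' n : {n : ℤ // (N:ℤ) < n}, ∑' p : ℤ, ∑' k : ℤ, (if (N:ℤ) ≤ |p+k| then
          ENNReal.ofReal ((r (p+k))^2 / (((n.1:ℝ)-(p:ℝ))^2 * ((n.1:ℝ)-(k:ℝ))^2)) else 0))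
        + (∑' n : {n : ℤ // (N:ℤ) < n}, ∑' p : ℤ, ∑' k : ℤ,
            ENNReal.ofReal (4 * (r (p+k))^2 / ((n.1:ℝ)^2 * ((n.1:ℝ)-(k:ℝ))^2)))
        + (∑' n : {n : ℤ // (N:ℤ) < n}, ∑' p : ℤ, ∑' k : ℤ,
            ENNReal.ofReal (4 * (r (p+k))^2 / ((n.1:ℝ)^2 * ((n.1:ℝ)-(p:ℝ))^2))) := by
        rw [← ENNReal.tsum_add, ← ENNReal.tsum_add]
    _ ≤ Gc * (Gc * tailNorm2 r N)
        + 4 * ENNReal.ofReal (1/(N:ℝ)) * (Gc * l2norm2 r)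
        + 4 * ENNReal.ofReal (1/(N:ℝ)) * (Gc * l2norm2 r) :=
        add_le_add (add_le_add (sumA r N) (sumB r N hN)) (sumC r N hN)
    _ ≤ ENNReal.ofReal (8*g + g^2 + 1) * (l2norm2 r / (N : ℝ≥0∞) + tailNorm2 r N) := by
        have hinv : ENNReal.ofReal (1/(N:ℝ)) = ((N:ℝ≥0∞))⁻¹ := by
          rw [one_div, ENNReal.ofReal_inv_of_pos hNpos, ENNReal.ofReal_natCast]
        have e1 : Gc * (Gc * tailNorm2 r N)
            ≤ ENNReal.ofReal (8*g + g^2 + 1) * tailNorm2 r N := by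
          rw [hGc, ← mul_assoc, ← ENNReal.ofReal_mul hg0]
          exact mul_le_mul_left (ENNReal.ofReal_le_ofReal (by nlinarith)) _
        have e2 : 4 * ENNReal.ofReal (1/(N:ℝ)) * (Gc * l2norm2 r)
            + 4 * ENNReal.ofReal (1/(N:ℝ)) * (Gc * l2norm2 r)
            ≤ ENNReal.ofReal (8*g + g^2 + 1) * (l2norm2 r / (N : ℝ≥0∞)) := by
          have hcomb : 4 * ENNReal.ofReal (1/(N:ℝ)) * (Gc * l2norm2 r)
              + 4 * ENNReal.ofReal (1/(N:ℝ)) * (Gc * l2norm2 r)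
              = (8 * Gc) * (l2norm2 r * ((N:ℝ≥0∞))⁻¹) := by
            rw [hinv]; ring
          rw [hcomb, div_eq_mul_inv]
          refine mul_le_mul_left ?_ _
          rw [hGc, show (8:ℝ≥0∞) = ENNReal.ofReal 8 by norm_num,
            ← ENNReal.ofReal_mul (by norm_num)]
          exact ENNReal.ofReal_le_ofReal (by nlinarith)
        calc Gc * (Gc * tailNorm2 r N)
            + 4 * ENNReal.ofReal (1/(N:ℝ)) * (Gc * l2norm2 r)
            + 4 * ENNReal.ofReal (1/(N:ℝ)) * (Gc * l2norm2 r)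
            = Gc * (Gc * tailNorm2 r N)
              + (4 * ENNReal.ofReal (1/(N:ℝ)) * (Gc * l2norm2 r)
                + 4 * ENNReal.ofReal (1/(N:ℝ)) * (Gc * l2norm2 r)) := by ring
          _ ≤ ENNReal.ofReal (8*g + g^2 + 1) * tailNorm2 r N
              + ENNReal.ofReal (8*g + g^2 + 1) * (l2norm2 r / (N : ℝ≥0∞)) :=
              add_le_add e1 e2
          _ = ENNReal.ofReal (8*g + g^2 + 1) * (l2norm2 r / (N : ℝ≥0∞) + tailNorm2 r N) := by
              ring
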